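/- Unconditional stability of the fixed stress scheme: Fix constants a_max > 0, 0 < k_min ≤ k_max, β_e > 0, β_d > 0, c_ι > 0 and 0 < α ≤ 1. There exists a constant C, depending only on α, a_max, k_min, k_max, β_e, β_d and c_ι — in particular independent of N, Δt, c₀, a_min and of the spaces, operators and sequences below — such that the following holds. Let X, V, Q, Z, W be real inner product spaces; A : X →L[ℝ] X symmetric with a_min ‖τ‖² ≤ ⟪A τ, τ⟫ ≤ a_max ‖τ‖² for all τ (for some a_min > 0); T : Z →L[ℝ] Z symmetric with (1/k_max)‖q‖² ≤ ⟪T q, q⟫ ≤ (1/k_min)‖q‖² for all q; Dₑ : X →ₗ V, S : X →ₗ Q, D : Z →ₗ W linear maps satisfying the elasticity inf-sup condition with constant β_e and the Darcy inf-sup condition with constant β_d; ι : W →ₗ X linear with ‖ι w‖ ≤ c_ι ‖w‖ for all w; c₀ ≥ 0, Δt > 0, N ≥ 1. Suppose σ⁰,…,σᴺ ∈ X, u⁰,…,uᴺ ∈ V, γ⁰,…,γᴺ ∈ Q, z⁰,…,zᴺ ∈ Z, p⁰,…,pᴺ ∈ W satisfy, with the convention σ^{−1} := σ⁰, for every n =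 −1, 0, …, N−1: (i) ⟪T z^{n+1}, q⟫ = ⟪p^{n+1}, D q⟫ for all q ∈ Z; (ii) ⟪A σ^{n+1}, τ⟫ + ⟪u^{n+1}, Dₑ τ⟫ + ⟪γ^{n+1}, S τ⟫ = −α ⟪A(ι p^{n+1}), τ⟫ for all τ ∈ X; (iii) Dₑ σ^{n+1} = 0; (iv) S σ^{n+1} = 0; and for every n = 0, …, N−1: (v) (c₀/Δt)⟪p^{n+1} − p^{n}, w⟫ + (α²/Δt)⟪A ι(p^{n+1} − p^{n}), ι w⟫ + ⟪D z^{n+1}, w⟫ = −(α/Δt)⟪A(σ^{n} − σ^{n−1}), ι w⟫ for all w ∈ W. Then Σ_{n=0}^{N−1} (c₀/Δt)‖p^{n+1} − p^{n}‖² + max_{0 ≤ n ≤ N−1} ( ‖z^{n+1}‖² + ‖p^{n+1}‖² + ⟪A σ^{n+1}, σ^{n+1}⟫ + ‖u^{n+1}‖² + ‖γ^{n+1}‖² ) ≤ C ‖z⁰‖². -/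

import Mathlib

open scoped RealInnerProductSpace

lemma semi_cs {X : Type*} [NormedAddCommGroup X] [InnerProductSpace ℝ X]
    (B : X →L[ℝ] X) (hsym : ∀ x y : X, ⟪B x, y⟫ = ⟪x, B y⟫)
    (hpos : ∀ x : X, 0 ≤ ⟪B x, x⟫) (x y : X) :
    ⟪B x, y⟫ ^ 2 ≤ ⟪B x, x⟫ * ⟪B y, y⟫ := by
  have key : ∀ t : ℝ, 0 ≤ ⟪B x, x⟫ * (t * t) + (2 * ⟪B x, y⟫) * t + ⟪B y, y⟫ := by
    intro t
    have h := hpos (t • x + y)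
    have hyx : ⟪B y, x⟫ = ⟪B x, y⟫ := by rw [hsym y x, real_inner_comm]
    have hexp : ⟪B (t • x + y), t • x + y⟫
        = ⟪B x, x⟫ * (t * t) + (2 * ⟪B x, y⟫) * t + ⟪B y, y⟫ := by
      simp only [map_add, map_smul, inner_add_left, inner_add_right,
        real_inner_smul_left, real_inner_smul_right, ContinuousLinearMap.coe_smul',
        Pi.smul_apply, smul_eq_mul, conj_trivial]
      rw [hyx]; ring
    rw [hexp] at h
    exact h
  have hd := discrim_le_zero key
  rw [discrim] at hd
  nlinarith [hd]

set_option maxHeartbeats 4000000 in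
/-- Unconditional stability of the fixed stress scheme (abstract algebraic form).
The indices follow the convention `σ^{-1} := σ⁰`, realized via truncated natural
subtraction: equations (i)–(iv) are stated at levels `n = 0, …, N`, and
equation (v), with data `σ n - σ (n - 1)`, at steps `n = 0, …, N-1`. -/
theorem stmt_6 (α a_max k_min k_max β_e β_d c_ι : ℝ)
    (hα0 : 0 < α) (hα1 : α ≤ 1) (ha_max : 0 < a_max)
    (hk_min : 0 < k_min) (hk : k_min ≤ k_max)
    (hβ_e : 0 < β_e) (hβ_d : 0 < β_d) (hc_ι : 0 < c_ι) :
    ∃ C : ℝ, ∀ (X V Q Z W : Type*)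
      [NormedAddCommGroup X] [InnerProductSpace ℝ X]
      [NormedAddCommGroup V] [InnerProductSpace ℝ V]
      [NormedAddCommGroup Q] [InnerProductSpace ℝ Q]
      [NormedAddCommGroup Z] [InnerProductSpace ℝ Z]
      [NormedAddCommGroup W] [InnerProductSpace ℝ W]
      (A : X →L[ℝ] X) (T : Z →L[ℝ] Z)
      (De : X →ₗ[ℝ] V) (S : X →ₗ[ℝ] Q) (D : Z →ₗ[ℝ] W) (ι : W →ₗ[ℝ] X)
      (c₀ Δt : ℝ) (N : ℕ)
      (σ : ℕ → X) (u : ℕ → V) (γ : ℕ → Q) (z : ℕ → Z) (p : ℕ → W)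
      (hAsym : ∀ σ' τ : X, ⟪A σ', τ⟫ = ⟪σ', A τ⟫)
      (hAlow : ∃ a_min : ℝ, 0 < a_min ∧ ∀ τ : X, a_min * ‖τ‖ ^ 2 ≤ ⟪A τ, τ⟫)
      (hAup : ∀ τ : X, ⟪A τ, τ⟫ ≤ a_max * ‖τ‖ ^ 2)
      (hTsym : ∀ q r : Z, ⟪T q, r⟫ = ⟪q, T r⟫)
      (hTlow : ∀ q : Z, 1 / k_max * ‖q‖ ^ 2 ≤ ⟪T q, q⟫)
      (hTup : ∀ q : Z, ⟪T q, q⟫ ≤ 1 / k_min * ‖q‖ ^ 2)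
      (hinfsupE : ∀ (v : V) (ξ : Q), ∃ τ : X,
        Real.sqrt (‖τ‖ ^ 2 + ‖De τ‖ ^ 2) ≤ 1 ∧
        β_e * (‖v‖ + ‖ξ‖) ≤ ⟪v, De τ⟫ + ⟪ξ, S τ⟫)
      (hinfsupD : ∀ w : W, ∃ q : Z,
        Real.sqrt (‖q‖ ^ 2 + ‖D q‖ ^ 2) ≤ 1 ∧ β_d * ‖w‖ ≤ ⟪D q, w⟫)
      (hι : ∀ w : W, ‖ι w‖ ≤ c_ι * ‖w‖)
      (hc₀ : 0 ≤ c₀) (hΔt : 0 < Δt) (hN : 1 ≤ N)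
      (hi : ∀ n : ℕ, n ≤ N → ∀ τ : X,
        ⟪A (σ n), τ⟫ + ⟪u n, De τ⟫ + ⟪γ n, S τ⟫ = -(α * ⟪A (ι (p n)), τ⟫))
      (hii : ∀ n : ℕ, n ≤ N → De (σ n) = 0)
      (hiii : ∀ n : ℕ, n ≤ N → S (σ n) = 0)
      (hiv : ∀ n : ℕ, n ≤ N → ∀ q : Z, ⟪T (z n), q⟫ = ⟪p n, D q⟫)
      (hv : ∀ n : ℕ, n < N → ∀ w : W,
        c₀ / Δt * ⟪p (n + 1) - p n, w⟫
          + α ^ 2 / Δt * ⟪A (ι (p (n + 1) - p n)), ι w⟫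
          + ⟪D (z (n + 1)), w⟫
        = -(α / Δt * ⟪A (σ n - σ (n - 1)), ι w⟫)),
      (∑ n ∈ Finset.range N, c₀ / Δt * ‖p (n + 1) - p n‖ ^ 2)
        + ((Finset.range N).sup'
            (Finset.nonempty_range_iff.mpr (Nat.one_le_iff_ne_zero.mp hN))
            fun n => ‖z (n + 1)‖ ^ 2 + ‖p (n + 1)‖ ^ 2
              + ⟪A (σ (n + 1)), σ (n + 1)⟫ + ‖u (n + 1)‖ ^ 2 + ‖γ (n + 1)‖ ^ 2)
      ≤ C * ‖z 0‖ ^ 2 := by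
  classical
  refine ⟨1/(2*k_min) + (k_max/k_min
      + (1/(k_min^2*β_d^2)) * (1 + a_max*c_ι^2 + (2*a_max*c_ι/β_e)^2)), ?_⟩
  intro X V Q Z W _ _ _ _ _ _ _ _ _ _ A T De S D ι c₀ Δt N σ u γ z p
    hAsym hAlow hAup hTsym hTlow hTup hinfsupE hinfsupD hι hc₀ hΔt hN hi hii hiii hiv hv
  obtain ⟨a_min, ha_min, hAlow⟩ := hAlow
  have hk_max : (0:ℝ) < k_max := lt_of_lt_of_le hk_min hk
  have hApos : ∀ τ : X, 0 ≤ ⟪A τ, τ⟫ := fun τ => le_trans (by positivity) (hAlow τ)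
  have hTpos : ∀ q : Z, 0 ≤ ⟪T q, q⟫ := fun q => le_trans (by positivity) (hTlow q)
  have hcsA := semi_cs A hAsym hApos
  have hcsT := semi_cs T hTsym hTpos
  set E : ℕ → ℝ := fun n => ⟪T (z n), z n⟫ with hEdef
  set G : ℕ → ℝ := fun n => α^2/Δt * ⟪A (ι (p n - p (n-1))), ι (p n - p (n-1))⟫ with hGdef
  have hEpos : ∀ n, 0 ≤ E n := fun n => hTpos (z n)
  have hGpos : ∀ n, 0 ≤ G n := fun n => by
    have h1 := hApos (ι (p n - p (n-1)))
    have h2 : (0:ℝ) ≤ α^2/Δt := by positivity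
    exact mul_nonneg h2 h1
  -- domination: ⟪A s, s⟫ = -(α⟪A q, s⟫)  ⟹  ⟪A s, s⟫ ≤ α² ⟪A q, q⟫
  have quad_dom : ∀ s q : X, ⟪A s, s⟫ = -(α * ⟪A q, s⟫) → ⟪A s, s⟫ ≤ α^2 * ⟪A q, q⟫ := by
    intro s q h
    have hcs := hcsA q s
    have ha := hApos s
    have hb := hApos q
    rcases eq_or_lt_of_le ha with h0 | h0
    · rw [← h0]; positivity
    · nlinarith [hcs, h0, hb, sq_nonneg α]
  -- differenced mechanics identity
  have mech : ∀ m n : ℕ, m ≤ N → n ≤ N →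
      ⟪A (σ m - σ n), σ m - σ n⟫ = -(α * ⟪A (ι (p m - p n)), σ m - σ n⟫) := by
    intro m n hm hn
    have h1 := hi m hm (σ m - σ n)
    have h2 := hi n hn (σ m - σ n)
    have hDe : De (σ m - σ n) = 0 := by rw [map_sub, hii m hm, hii n hn, sub_zero]
    have hS : S (σ m - σ n) = 0 := by rw [map_sub, hiii m hm, hiii n hn, sub_zero]
    rw [hDe, hS, inner_zero_right, inner_zero_right, add_zero, add_zero] at h1 h2
    have e1 : ⟪A (σ m - σ n), σ m - σ n⟫
        = ⟪A (σ m), σ m - σ n⟫ - ⟪A (σ n), σ m - σ n⟫ := by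
      rw [map_sub, inner_sub_left]
    have e2 : ⟪A (ι (p m - p n)), σ m - σ n⟫
        = ⟪A (ι (p m)), σ m - σ n⟫ - ⟪A (ι (p n)), σ m - σ n⟫ := by
      rw [map_sub, map_sub, inner_sub_left]
    rw [e1, h1, h2, e2]; ring
  have key1 : ∀ n : ℕ, n ≤ N →
      ⟪A (σ n - σ (n-1)), σ n - σ (n-1)⟫
        ≤ α^2 * ⟪A (ι (p n - p (n-1))), ι (p n - p (n-1))⟫ :=
    fun n hn => quad_dom _ _ (mech n (n-1) hn (le_trans (Nat.sub_le n 1) hn))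
  -- per-step energy inequality
  have step : ∀ n, n < N →
      c₀/Δt * ‖p (n+1) - p n‖^2 + (G (n+1)/2 + E (n+1)/2) ≤ G n/2 + E n/2 := by
    intro n hn
    have hn1 : n + 1 ≤ N := hn
    have hnN : n ≤ N := le_of_lt hn
    set dp := p (n+1) - p n with hdp
    have h5 := hv n hn dp
    have hGsucc : G (n+1) = α^2/Δt * ⟪A (ι dp), ι dp⟫ := by
      simp only [hGdef, hdp, Nat.add_sub_cancel]
    have hDz : ⟪D (z (n+1)), dp⟫ = E (n+1) - ⟪T (z n), z (n+1)⟫ := by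
      have h1 := hiv (n+1) hn1 (z (n+1))
      have h2 := hiv n hnN (z (n+1))
      rw [real_inner_comm, hdp, inner_sub_left, ← h1, ← h2]
    have hTmix : ⟪T (z n), z (n+1)⟫ ≤ E n/2 + E (n+1)/2 := by
      have h0 := hTpos (z (n+1) - z n)
      have hyx : ⟪T (z (n+1)), z n⟫ = ⟪T (z n), z (n+1)⟫ := by
        rw [hTsym, real_inner_comm]
      have hexp : ⟪T (z (n+1) - z n), z (n+1) - z n⟫
          = E (n+1) - 2*⟪T (z n), z (n+1)⟫ + E n := by
        rw [map_sub, inner_sub_left, inner_sub_right, inner_sub_right, hyx]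
        simp only [hEdef]; ring
      rw [hexp] at h0; linarith
    set a := ⟪A (σ n - σ (n-1)), σ n - σ (n-1)⟫ with hadef
    set b := ⟪A (ι dp), ι dp⟫ with hbdef
    set c := ⟪A (σ n - σ (n-1)), ι dp⟫ with hcdef
    have hcs : c^2 ≤ a * b := hcsA _ _
    have ha0 : 0 ≤ a := hApos _
    have hb0 : 0 ≤ b := hApos _
    have habs : α * |c| ≤ (a + α^2*b)/2 := by
      have h1 : (α*|c|)^2 ≤ ((a + α^2*b)/2)^2 := by
        have h2 : α^2*c^2 ≤ α^2*(a*b) := mul_le_mul_of_nonneg_left hcs (by positivity)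
        have h3 : (α*|c|)^2 = α^2*c^2 := by rw [mul_pow, sq_abs]
        nlinarith [sq_nonneg (a - α^2*b)]
      have h2 : (0:ℝ) ≤ α*|c| := by positivity
      have h3 : (0:ℝ) ≤ (a + α^2*b)/2 := by positivity
      have h4 := Real.sqrt_le_sqrt h1
      rwa [Real.sqrt_sq h2, Real.sqrt_sq h3] at h4
    have hRHS : -(α/Δt * c) ≤ a/(2*Δt) + α^2*b/(2*Δt) := by
      have hd : (0:ℝ) ≤ 1/Δt := by positivity
      have h1 := mul_le_mul_of_nonneg_left habs hd
      have h2 : -c ≤ |c| := neg_le_abs c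
      have h3 : (0:ℝ) ≤ α/Δt := by positivity
      have h4 : α/Δt * (-c) ≤ α/Δt * |c| := mul_le_mul_of_nonneg_left h2 h3
      have hΔt' : Δt ≠ 0 := ne_of_gt hΔt
      calc -(α/Δt * c) = α/Δt * (-c) := by ring
        _ ≤ α/Δt * |c| := h4
        _ = 1/Δt * (α * |c|) := by ring
        _ ≤ 1/Δt * ((a + α^2*b)/2) := h1
        _ = a/(2*Δt) + α^2*b/(2*Δt) := by ring
    have hkey := key1 n hnN
    have e2 : a/(2*Δt) ≤ G n/2 := by
      have h : G n/2 = α^2 * ⟪A (ι (p n - p (n-1))), ι (p n - p (n-1))⟫/(2*Δt) := by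
        simp only [hGdef]; ring
      rw [h]
      exact (div_le_div_iff_of_pos_right (by positivity)).mpr hkey
    have e1 : α^2*b/(2*Δt) = G (n+1)/2 := by rw [hGsucc]; ring
    rw [real_inner_self_eq_norm_sq] at h5
    rw [hDz] at h5
    linarith [h5, hTmix, hRHS, e1, e2, hGsucc]
  -- energy decay
  have Hle : ∀ m, m ≤ N →
      (∑ k ∈ Finset.range m, c₀/Δt*‖p (k+1) - p k‖^2) + (G m/2 + E m/2)
        ≤ G 0/2 + E 0/2 := by
    intro m
    induction m with
    | zero => intro _; simp
    | succ k ih =>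
      intro hm
      have h1 := step k (by omega)
      have h2 := ih (by omega)
      rw [Finset.sum_range_succ]
      linarith
  have hG0 : G 0 = 0 := by
    simp only [hGdef, Nat.zero_sub, sub_self, map_zero, inner_zero_right, mul_zero]
  have hE0 : E 0 ≤ 1/k_min * ‖z 0‖^2 := hTup (z 0)
  have hsum_nonneg : ∀ m : ℕ, (0:ℝ) ≤ ∑ k ∈ Finset.range m, c₀/Δt*‖p (k+1) - p k‖^2 :=
    fun m => Finset.sum_nonneg (fun k _ => mul_nonneg (div_nonneg hc₀ hΔt.le) (sq_nonneg _))
  have hEm : ∀ m, m ≤ N → E m ≤ E 0 := by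
    intro m hm
    have h1 := Hle m hm
    rw [hG0] at h1
    linarith [hsum_nonneg m, hGpos m]
  have hsum : (∑ n ∈ Finset.range N, c₀/Δt*‖p (n+1) - p n‖^2) ≤ E 0/2 := by
    have h1 := Hle N le_rfl
    rw [hG0] at h1
    linarith [hGpos N, hEpos N]
  set B := ‖z 0‖^2 with hBdef
  have hB : 0 ≤ B := by positivity
  -- per-index bounds
  have hbound : ∀ n ∈ Finset.range N,
      ‖z (n+1)‖^2 + ‖p (n+1)‖^2 + ⟪A (σ (n+1)), σ (n+1)⟫ + ‖u (n+1)‖^2 + ‖γ (n+1)‖^2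
        ≤ (k_max/k_min + (1/(k_min^2*β_d^2)) * (1 + a_max*c_ι^2 + (2*a_max*c_ι/β_e)^2)) * B := by
    intro n hnmem
    have hm : n + 1 ≤ N := Finset.mem_range.mp hnmem
    set m := n + 1 with hmdef
    -- z bound
    have hz : ‖z m‖^2 ≤ k_max/k_min * B := by
      calc ‖z m‖^2 = k_max * (1/k_max * ‖z m‖^2) := by field_simp
        _ ≤ k_max * E m := mul_le_mul_of_nonneg_left (hTlow (z m)) hk_max.le
        _ ≤ k_max * E 0 := mul_le_mul_of_nonneg_left (hEm m hm) hk_max.le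
        _ ≤ k_max * (1/k_min * B) := mul_le_mul_of_nonneg_left hE0 hk_max.le
        _ = k_max/k_min * B := by ring
    -- p bound
    have hp2 : ‖p m‖^2 ≤ 1/(k_min^2*β_d^2) * B := by
      obtain ⟨q, hq1, hq2⟩ := hinfsupD (p m)
      have hqn : ‖q‖ ≤ 1 := by
        have h1 : ‖q‖ = Real.sqrt (‖q‖^2) := (Real.sqrt_sq (norm_nonneg q)).symm
        rw [h1]
        exact le_trans (Real.sqrt_le_sqrt (by nlinarith [sq_nonneg ‖D q‖])) hq1
      have hTzq : ⟪D q, p m⟫ = ⟪T (z m), q⟫ := by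
        rw [real_inner_comm]; exact (hiv m hm q).symm
      have hcs2 : ⟪T (z m), q⟫^2 ≤ E m * (1/k_min) := by
        have h1 := hcsT (z m) q
        have h2 : ⟪T q, q⟫ ≤ 1/k_min := by
          have h3 := hTup q
          have h4 : ‖q‖^2 ≤ 1 := by nlinarith [norm_nonneg q]
          have h5 : 1/k_min*‖q‖^2 ≤ 1/k_min := by
            have h6 : (0:ℝ) ≤ 1/k_min := by positivity
            nlinarith [h4, h6]
          linarith
        calc ⟪T (z m), q⟫^2 ≤ E m * ⟪T q, q⟫ := h1
          _ ≤ E m * (1/k_min) := mul_le_mul_of_nonneg_left h2 (hEpos m)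
      have hpm : β_d * ‖p m‖ ≤ Real.sqrt (E m * (1/k_min)) := by
        calc β_d * ‖p m‖ ≤ ⟪D q, p m⟫ := hq2
          _ = ⟪T (z m), q⟫ := hTzq
          _ ≤ |⟪T (z m), q⟫| := le_abs_self _
          _ ≤ Real.sqrt (E m * (1/k_min)) := Real.abs_le_sqrt hcs2
      have h1 : (β_d*‖p m‖)^2 ≤ E m * (1/k_min) := by
        have hnn : (0:ℝ) ≤ β_d*‖p m‖ := by positivity
        have hsq := Real.sq_sqrt (mul_nonneg (hEpos m) (by positivity))
        nlinarith [hpm, Real.sqrt_nonneg (E m * (1/k_min))]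
      have h2 : E m * (1/k_min) ≤ 1/k_min^2 * B := by
        calc E m * (1/k_min) ≤ E 0 * (1/k_min) :=
              mul_le_mul_of_nonneg_right (hEm m hm) (by positivity)
          _ ≤ (1/k_min*B) * (1/k_min) := mul_le_mul_of_nonneg_right hE0 (by positivity)
          _ = 1/k_min^2 * B := by ring
      have h6 : β_d^2*‖p m‖^2 ≤ 1/k_min^2*B := by nlinarith [h1, h2]
      have hkne : k_min ≠ 0 := ne_of_gt hk_min
      have hbne : β_d ≠ 0 := ne_of_gt hβ_d
      have h7 : (1:ℝ)/(k_min^2*β_d^2)*B = (1/k_min^2*B)/β_d^2 := by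
        field_simp
      rw [h7, le_div_iff₀ (by positivity)]
      nlinarith [h6]
    -- σ bound
    have hσeq : ⟪A (σ m), σ m⟫ = -(α*⟪A (ι (p m)), σ m⟫) := by
      have h1 := hi m hm (σ m)
      rw [hii m hm, hiii m hm, inner_zero_right, inner_zero_right, add_zero, add_zero] at h1
      exact h1
    have hσ1 : ⟪A (σ m), σ m⟫ ≤ α^2*⟪A (ι (p m)), ι (p m)⟫ := quad_dom _ _ hσeq
    have hιp : ⟪A (ι (p m)), ι (p m)⟫ ≤ a_max*c_ι^2*‖p m‖^2 := by
      have h2 := hι (p m)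
      calc ⟪A (ι (p m)), ι (p m)⟫ ≤ a_max*‖ι (p m)‖^2 := hAup (ι (p m))
        _ ≤ a_max*(c_ι*‖p m‖)^2 :=
            mul_le_mul_of_nonneg_left (pow_le_pow_left₀ (norm_nonneg _) h2 2) ha_max.le
        _ = a_max*c_ι^2*‖p m‖^2 := by ring
    have hσ : ⟪A (σ m), σ m⟫ ≤ a_max*c_ι^2*‖p m‖^2 := by
      have hα2 : α^2 ≤ 1 := by nlinarith
      nlinarith [hσ1, hιp, hα2, hApos (ι (p m))]
    -- u, γ bound
    have huγ : ‖u m‖^2 + ‖γ m‖^2 ≤ (2*a_max*c_ι/β_e)^2*‖p m‖^2 := by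
      obtain ⟨τ, hτ1, hτ2⟩ := hinfsupE (u m) (γ m)
      have hτn : ‖τ‖ ≤ 1 := by
        have h1 : ‖τ‖ = Real.sqrt (‖τ‖^2) := (Real.sqrt_sq (norm_nonneg τ)).symm
        rw [h1]
        exact le_trans (Real.sqrt_le_sqrt (by nlinarith [sq_nonneg ‖De τ‖])) hτ1
      have hmech2 := hi m hm τ
      set M := a_max*c_ι*‖p m‖ with hMdef
      have hM0 : 0 ≤ M := by positivity
      have hAττ : ⟪A τ, τ⟫ ≤ a_max := by
        have h1 := hAup τ
        have h4 : ‖τ‖^2 ≤ 1 := by nlinarith [norm_nonneg τ]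
        nlinarith [h1, h4, ha_max.le]
      have habs1 : |⟪A (σ m), τ⟫| ≤ M := by
        have hx : ⟪A (σ m), τ⟫^2 ≤ M^2 := by
          calc ⟪A (σ m), τ⟫^2 ≤ ⟪A (σ m), σ m⟫*⟪A τ, τ⟫ := hcsA _ _
            _ ≤ (a_max*c_ι^2*‖p m‖^2)*a_max := mul_le_mul hσ hAττ (hApos τ) (by positivity)
            _ = M^2 := by rw [hMdef]; ring
        have h2 := Real.abs_le_sqrt hx
        rwa [Real.sqrt_sq hM0] at h2
      have habs2 : |⟪A (ι (p m)), τ⟫| ≤ M := by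
        have hx : ⟪A (ι (p m)), τ⟫^2 ≤ M^2 := by
          calc ⟪A (ι (p m)), τ⟫^2 ≤ ⟪A (ι (p m)), ι (p m)⟫*⟪A τ, τ⟫ := hcsA _ _
            _ ≤ (a_max*c_ι^2*‖p m‖^2)*a_max := mul_le_mul hιp hAττ (hApos τ) (by positivity)
            _ = M^2 := by rw [hMdef]; ring
        have h2 := Real.abs_le_sqrt hx
        rwa [Real.sqrt_sq hM0] at h2
      have huγ1 : β_e*(‖u m‖+‖γ m‖) ≤ 2*M := by
        have h3 : ⟪u m, De τ⟫ + ⟪γ m, S τ⟫ = -⟪A (σ m), τ⟫ - α*⟪A (ι (p m)), τ⟫ := by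
          linarith [hmech2]
        have h4 : -⟪A (σ m), τ⟫ ≤ M := by
          have := neg_abs_le ⟪A (σ m), τ⟫; linarith [habs1]
        have h5 : -(α*⟪A (ι (p m)), τ⟫) ≤ M := by
          have h6 : -(α*⟪A (ι (p m)), τ⟫) ≤ α*|⟪A (ι (p m)), τ⟫| := by
            nlinarith [neg_abs_le ⟪A (ι (p m)), τ⟫, hα0.le]
          have h7 : α*|⟪A (ι (p m)), τ⟫| ≤ 1*M := by
            apply mul_le_mul hα1 habs2 (abs_nonneg _) zero_le_one
          linarith
        calc β_e*(‖u m‖+‖γ m‖) ≤ ⟪u m, De τ⟫ + ⟪γ m, S τ⟫ := hτ2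
          _ = -⟪A (σ m), τ⟫ - α*⟪A (ι (p m)), τ⟫ := h3
          _ ≤ M + M := by linarith [h4, h5]
          _ = 2*M := by ring
      have h8 : ‖u m‖ + ‖γ m‖ ≤ 2*M/β_e := by
        rw [le_div_iff₀ hβ_e]; linarith [huγ1, mul_comm (‖u m‖ + ‖γ m‖) β_e]
      have h9 : (2*a_max*c_ι/β_e)^2*‖p m‖^2 = (2*M/β_e)^2 := by
        rw [hMdef]; field_simp
      rw [h9]
      have hs0 : (0:ℝ) ≤ ‖u m‖ + ‖γ m‖ := by positivity
      have h11 : (‖u m‖+‖γ m‖)^2 ≤ (2*M/β_e)^2 := pow_le_pow_left₀ hs0 h8 2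
      nlinarith [h11, mul_nonneg (norm_nonneg (u m)) (norm_nonneg (γ m))]
    -- combine
    have c1 : ⟪A (σ m), σ m⟫ ≤ a_max*c_ι^2*(1/(k_min^2*β_d^2)*B) := by
      refine le_trans hσ ?_
      exact mul_le_mul_of_nonneg_left hp2 (by positivity)
    have c2 : ‖u m‖^2 + ‖γ m‖^2 ≤ (2*a_max*c_ι/β_e)^2*(1/(k_min^2*β_d^2)*B) := by
      refine le_trans huγ ?_
      exact mul_le_mul_of_nonneg_left hp2 (by positivity)
    have hfin : k_max/k_min*B + 1/(k_min^2*β_d^2)*B + a_max*c_ι^2*(1/(k_min^2*β_d^2)*B)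
        + (2*a_max*c_ι/β_e)^2*(1/(k_min^2*β_d^2)*B)
        = (k_max/k_min + (1/(k_min^2*β_d^2)) * (1 + a_max*c_ι^2 + (2*a_max*c_ι/β_e)^2)) * B := by
      ring
    linarith [hz, hp2, c1, c2]
  have hsup := Finset.sup'_le
    (Finset.nonempty_range_iff.mpr (Nat.one_le_iff_ne_zero.mp hN))
    (fun n => ‖z (n + 1)‖ ^ 2 + ‖p (n + 1)‖ ^ 2
      + ⟪A (σ (n + 1)), σ (n + 1)⟫ + ‖u (n + 1)‖ ^ 2 + ‖γ (n + 1)‖ ^ 2) hbound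
  have hsum' : (∑ n ∈ Finset.range N, c₀/Δt*‖p (n+1) - p n‖^2) ≤ 1/(2*k_min)*B := by
    have h1 : 1/(2*k_min)*B = (1/k_min*B)/2 := by ring
    rw [h1]; linarith [hsum, hE0]
  have hfinal : (1/(2*k_min) + (k_max/k_min
      + (1/(k_min^2*β_d^2)) * (1 + a_max*c_ι^2 + (2*a_max*c_ι/β_e)^2))) * B
      = 1/(2*k_min)*B + (k_max/k_min
      + (1/(k_min^2*β_d^2)) * (1 + a_max*c_ι^2 + (2*a_max*c_ι/β_e)^2))*B := by ring
  linarith [hsup, hsum', hfinal]
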